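/- For the M9 symmetrized inverse system (equations −S₁ = k₅, −S₂ = k₅(k₁+k₂+L₁), L₁ = −Σkᵢ, L₃ = −k₁k₂k₅, L₂ = k₁k₂+k₁k₄+k₁k₅+k₂k₃+k₂k₅), with S₁ ≠ 0, L₃ ≠ 0, and D := (L₁S₁−S₂)² − 4L₃S₁ > 0, the explicit formulas k₅ = −S₁, k₁ = −(L₁S₁ − S₂ + √D)/(2S₁), k₂ = −(L₁S₁ − S₂ − √D)/(2S₁), together with the corresponding expressions for k₃ and k₄, satisfy all five equations, and swapping the choice of sign in front of √D yields the second solution obtained from the first by exchanging k₁↔k₂ and k₃↔k₄. -/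

import Mathlib

/-- The five equations of the M9 symmetrized inverse system. -/
def M9System (k1 k2 k3 k4 k5 L1 L2 L3 S1 S2 : ℝ) : Prop :=
  (-S1 = k5) ∧
  (-S2 = k5 * (k1 + k2 + L1)) ∧
  (L1 = -k1 - k2 - k3 - k4 - k5) ∧
  (L3 = -k1 * k2 * k5) ∧
  (L2 = k1 * k2 + k1 * k4 + k1 * k5 + k2 * k3 + k2 * k5)

lemma M9System_swap {k1 k2 k3 k4 k5 L1 L2 L3 S1 S2 : ℝ}
    (h : M9System k1 k2 k3 k4 k5 L1 L2 L3 S1 S2) :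
    M9System k2 k1 k4 k3 k5 L1 L2 L3 S1 S2 := by
  obtain ⟨h1, h2, h3, h4, h5⟩ := h
  refine ⟨h1, by linarith, by linarith, by linear_combination h4, by linear_combination h5⟩

/-- Under `S₁ ≠ 0`, `L₃ ≠ 0` and positive discriminant `D = (L₁S₁−S₂)² − 4L₃S₁`, the
explicit formulas `k₅ = −S₁`, `k₁,₂ = −(L₁S₁−S₂ ± √D)/(2S₁)` together with the
corresponding expressions for `k₃, k₄` solve all five M9 equations, and swapping the sign
of `√D` yields the second solution, obtained from the first by exchanging `k₁ ↔ k₂` and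
`k₃ ↔ k₄`. -/
theorem model9_explicit_solutions (L1 L2 L3 S1 S2 k1 k2 k3 k4 k5 : ℝ)
    (hS1 : S1 ≠ 0) (hL3 : L3 ≠ 0)
    (hdisc : 0 < (L1 * S1 - S2) ^ 2 - 4 * L3 * S1)
    (hk5 : k5 = -S1)
    (hk1 : k1 = -(L1 * S1 - S2 + Real.sqrt ((L1 * S1 - S2) ^ 2 - 4 * L3 * S1)) / (2 * S1))
    (hk2 : k2 = -(L1 * S1 - S2 - Real.sqrt ((L1 * S1 - S2) ^ 2 - 4 * L3 * S1)) / (2 * S1))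
    (hk3 : k3 = (S1 ^ 2 - S2 -
        (L1 * S1 ^ 3 - S1 ^ 2 * S2 - 2 * L2 * S1 ^ 2 + L1 * S1 * S2 + 2 * L3 * S1 - S2 ^ 2) /
          Real.sqrt ((L1 * S1 - S2) ^ 2 - 4 * L3 * S1)) / (2 * S1))
    (hk4 : k4 = (S1 ^ 2 - S2 +
        (L1 * S1 ^ 3 - S1 ^ 2 * S2 - 2 * L2 * S1 ^ 2 + L1 * S1 * S2 + 2 * L3 * S1 - S2 ^ 2) /
          Real.sqrt ((L1 * S1 - S2) ^ 2 - 4 * L3 * S1)) / (2 * S1)) :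
    M9System k1 k2 k3 k4 k5 L1 L2 L3 S1 S2 ∧
    M9System k2 k1 k4 k3 k5 L1 L2 L3 S1 S2 := by
  set s : ℝ := Real.sqrt ((L1 * S1 - S2) ^ 2 - 4 * L3 * S1) with hs
  have hspos : 0 < s := Real.sqrt_pos.mpr hdisc
  have hs0 : s ≠ 0 := ne_of_gt hspos
  have hs2 : s ^ 2 = (L1 * S1 - S2) ^ 2 - 4 * L3 * S1 := Real.sq_sqrt hdisc.le
  subst hk1 hk2 hk3 hk4 hk5
  have hmain : M9System (-(L1 * S1 - S2 + s) / (2 * S1))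
      (-(L1 * S1 - S2 - s) / (2 * S1))
      ((S1 ^ 2 - S2 - (L1 * S1 ^ 3 - S1 ^ 2 * S2 - 2 * L2 * S1 ^ 2 + L1 * S1 * S2 +
        2 * L3 * S1 - S2 ^ 2) / s) / (2 * S1))
      ((S1 ^ 2 - S2 + (L1 * S1 ^ 3 - S1 ^ 2 * S2 - 2 * L2 * S1 ^ 2 + L1 * S1 * S2 +
        2 * L3 * S1 - S2 ^ 2) / s) / (2 * S1))
      (-S1) L1 L2 L3 S1 S2 := by
    refine ⟨rfl, ?_, ?_, ?_, ?_⟩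
    · field_simp
      ring
    · field_simp
      ring
    · field_simp
      linear_combination hs2
    · field_simp
      linear_combination s * hs2
  exact ⟨hmain, M9System_swap hmain⟩
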